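/- For probability distributions r, s on a finite set, the Kullback–Leibler divergence in bits satisfies D(r‖s) ≥ -2·log₂ F(r,s), where F(r,s) = Σ_m √(r(m)·s(m)) is the Bhattacharyya coefficient. -/

import Mathlib

/-- Kullback–Leibler divergence in bits. -/
noncomputable def klDiv2 {S : Type} [Fintype S] (r s : S → ℝ) : ℝ :=
  ∑ m, r m * Real.logb 2 (r m / s m)

theorem klDiv_ge_neg_two_log_fid {S : Type} [Fintype S]
    (r s : S → ℝ) (hr : ∀ m, 0 ≤ r m) (hs : ∀ m, 0 ≤ s m)
    (hrs : ∑ m, r m = 1) (hss : ∑ m, s m = 1)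
    (habs : ∀ m, 0 < r m → 0 < s m) :
    klDiv2 r s ≥ -2 * Real.logb 2 (∑ m, Real.sqrt (r m * s m)) := by
  classical
  set T : Finset S := Finset.univ.filter (fun m => 0 < r m) with hT
  have hrT : ∀ m ∈ T, 0 < r m := fun m hm => (Finset.mem_filter.mp hm).2
  have hsT : ∀ m ∈ T, 0 < s m := fun m hm => habs m (hrT m hm)
  have hzero : ∀ m ∈ Finset.univ, m ∉ T → r m = 0 := by
    intro m _ hm
    have : ¬ 0 < r m := by simpa [hT] using hm
    linarith [hr m]
  have hsum1 : ∑ m ∈ T, r m = 1 := by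
    rw [← hrs]
    exact (Finset.sum_subset (Finset.subset_univ T) hzero)
  set F : ℝ := ∑ m, Real.sqrt (r m * s m) with hF
  have hFT : ∑ m ∈ T, Real.sqrt (r m * s m) ≤ F := by
    apply Finset.sum_le_sum_of_subset_of_nonneg (Finset.subset_univ T)
    intro m _ _; positivity
  have hTsumpos : 0 < ∑ m ∈ T, Real.sqrt (r m * s m) := by
    have hne : T.Nonempty := by
      by_contra h
      rw [Finset.not_nonempty_iff_eq_empty] at h
      rw [h] at hsum1; simp at hsum1
    obtain ⟨m, hm⟩ := hne
    apply Finset.sum_pos' (fun i _ => Real.sqrt_nonneg _) ⟨m, hm, ?_⟩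
    exact Real.sqrt_pos.mpr (mul_pos (hrT m hm) (hsT m hm))
  have hFpos : 0 < F := lt_of_lt_of_le hTsumpos hFT
  -- Jensen
  have jensen : ∑ m ∈ T, r m • Real.log (Real.sqrt (s m / r m)) ≤
      Real.log (∑ m ∈ T, r m • Real.sqrt (s m / r m)) := by
    apply (strictConcaveOn_log_Ioi.concaveOn).le_map_sum
      (fun m hm => (hrT m hm).le) hsum1
    intro m hm
    exact Set.mem_Ioi.mpr (Real.sqrt_pos.mpr (div_pos (hsT m hm) (hrT m hm)))
  have hconv : ∑ m ∈ T, r m • Real.sqrt (s m / r m) = ∑ m ∈ T, Real.sqrt (r m * s m) := by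
    apply Finset.sum_congr rfl
    intro m hm
    have hrm := hrT m hm
    rw [smul_eq_mul, ← Real.sqrt_sq hrm.le, ← Real.sqrt_mul (sq_nonneg _)]
    congr 1
    field_simp
    rw [Real.sq_sqrt (sq_nonneg _)]
    ring
  have key : ∑ m ∈ T, r m * Real.log (Real.sqrt (s m / r m)) ≤ Real.log F := by
    calc ∑ m ∈ T, r m * Real.log (Real.sqrt (s m / r m))
        ≤ Real.log (∑ m ∈ T, r m • Real.sqrt (s m / r m)) := jensen
      _ = Real.log (∑ m ∈ T, Real.sqrt (r m * s m)) := by rw [hconv]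
      _ ≤ Real.log F := Real.log_le_log hTsumpos hFT
  have hlog2 : (0:ℝ) < Real.log 2 := Real.log_pos (by norm_num)
  have hkl : klDiv2 r s = (-2 / Real.log 2) * ∑ m ∈ T, r m * Real.log (Real.sqrt (s m / r m)) := by
    unfold klDiv2
    rw [← Finset.sum_subset (Finset.subset_univ T)
      (fun m _ hm => by rw [hzero m (Finset.mem_univ m) hm]; ring)]
    rw [Finset.mul_sum]
    apply Finset.sum_congr rfl
    intro m hm
    have hrm := hrT m hm
    have hsm := hsT m hm
    rw [Real.logb, Real.log_sqrt (div_nonneg hsm.le hrm.le),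
      Real.log_div hsm.ne' hrm.ne', Real.log_div hrm.ne' hsm.ne']
    field_simp
    ring
  rw [hkl, Real.logb, ge_iff_le]
  have h2 : -2 / Real.log 2 < 0 := div_neg_of_neg_of_pos (by norm_num) hlog2
  have := mul_le_mul_of_nonpos_left key h2.le
  calc -2 * (Real.log F / Real.log 2) = -2 / Real.log 2 * Real.log F := by ring
    _ ≤ _ := this
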